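/- For all 1 ≤ k, ℓ ≤ n, the partial derivative ∂h_ℓ/∂e_k ∈ ℚ[e_1, …, e_n] has integer coefficients, i.e., it lies in the image of ℤ[e_1, …, e_n] in ℚ[e_1, …, e_n]. -/

import Mathlib

open MvPolynomial Finset

noncomputable def ee (K : Type) [CommRing K] (n : ℕ) : ℕ → MvPolynomial (Fin n) K
  | 0 => 1
  | (m + 1) => if h : m + 1 ≤ n then MvPolynomial.X ⟨m, by omega⟩ else 0

noncomputable def DD (K : Type) [CommRing K] (n : ℕ) (i : Fin n) :
    MvPolynomial (Fin n) K →ₗ[K] MvPolynomial (Fin n) K :=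
  ∑ j : Fin n, if i ≤ j then
    (LinearMap.mulLeft K (ee K n (j.val - i.val))).comp (MvPolynomial.pderiv j).toLinearMap
  else 0

/-- Newton's recursion: `s_{ℓ} = (−1)^{ℓ−1} ℓ e_ℓ + ∑_{j=1}^{ℓ−1} (−1)^{j−1} e_j s_{ℓ−j}`. -/
noncomputable def ss (n : ℕ) : ℕ → MvPolynomial (Fin n) ℚ
  | 0 => 0
  | (ℓ + 1) =>
    ((-1 : ℚ) ^ ℓ * ((ℓ : ℚ) + 1)) • ee ℚ n (ℓ + 1) +
      ∑ j ∈ Finset.range ℓ, ((-1 : ℚ) ^ j) • (ee ℚ n (j + 1) * ss n (ℓ - j))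
decreasing_by omega

/-- `h_ℓ = (−1)^{ℓ−1} s_ℓ / ℓ`, with `ℓ = i + 1`. -/
noncomputable def hh (n : ℕ) (i : Fin n) : MvPolynomial (Fin n) ℚ :=
  ((-1 : ℚ) ^ (i : ℕ) / ((i : ℕ) + 1)) • ss n ((i : ℕ) + 1)

lemma ee_map (n m : ℕ) :
    MvPolynomial.map (Int.castRingHom ℚ) (ee ℤ n m) = ee ℚ n m := by
  cases m with
  | zero => simp [ee]
  | succ m => simp only [ee]; split <;> simp

noncomputable def HZ (n : ℕ) : ℕ → MvPolynomial (Fin n) ℤ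
  | 0 => 1
  | (m + 1) => ∑ j ∈ Finset.range (m + 1), ((-1 : ℤ) ^ j) • (ee ℤ n (j + 1) * HZ n (m - j))
decreasing_by omega

noncomputable def HQ (n m : ℕ) : MvPolynomial (Fin n) ℚ :=
  MvPolynomial.map (Int.castRingHom ℚ) (HZ n m)

lemma HQ_zero (n : ℕ) : HQ n 0 = 1 := by simp [HQ, HZ]

lemma HQ_succ (n m : ℕ) :
    HQ n (m + 1)
      = ∑ j ∈ Finset.range (m + 1), ((-1 : ℚ) ^ j) • (ee ℚ n (j + 1) * HQ n (m - j)) := by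
  rw [HQ, HZ]
  simp only [smul_eq_C_mul, map_sum, map_mul, map_pow, map_neg, map_one, ee_map, map_C]
  simp [HQ]


lemma tri {M : Type*} [AddCommMonoid M] (m : ℕ) (f : ℕ → ℕ → M) :
    ∑ j ∈ range m, ∑ i ∈ range (m - j), f j i
      = ∑ i ∈ range m, ∑ j ∈ range (m - i), f j i := by
  have key : ∀ (g : ℕ → ℕ → M) (a : ℕ),
      (∑ b ∈ range (m - a), g a b) = ∑ b ∈ range m, if a + b < m then g a b else 0 := by
    intro g a
    rw [← Finset.sum_filter]
    apply Finset.sum_congr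
    · ext b; simp only [Finset.mem_filter, Finset.mem_range]; omega
    · intros; rfl
  calc ∑ j ∈ range m, ∑ i ∈ range (m - j), f j i
      = ∑ j ∈ range m, ∑ i ∈ range m, if j + i < m then f j i else 0 := by
        exact Finset.sum_congr rfl fun j _ => key f j
    _ = ∑ i ∈ range m, ∑ j ∈ range m, if j + i < m then f j i else 0 := Finset.sum_comm
    _ = ∑ i ∈ range m, ∑ j ∈ range (m - i), f j i := by
        refine Finset.sum_congr rfl fun i _ => ?_
        rw [key (fun a b => f b a) i]
        refine Finset.sum_congr rfl fun j _ => ?_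
        rw [Nat.add_comm]

lemma ss_eq (n m : ℕ) : ss n (m + 1)
    = ∑ i ∈ range (m + 1), ((-1 : ℚ) ^ i * ((i : ℚ) + 1)) • (ee ℚ n (i + 1) * HQ n (m - i)) := by
  induction m using Nat.strong_induction_on with
  | _ m IH =>
  rw [ss, Finset.sum_range_succ, Nat.sub_self, HQ_zero, mul_one, add_comm]
  congr 1
  calc ∑ j ∈ range m, ((-1 : ℚ) ^ j) • (ee ℚ n (j + 1) * ss n (m - j))
      = ∑ j ∈ range m, ∑ i ∈ range (m - j),
          ((-1 : ℚ) ^ j * ((-1 : ℚ) ^ i * ((i : ℚ) + 1)))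
            • (ee ℚ n (j + 1) * (ee ℚ n (i + 1) * HQ n (m - j - 1 - i))) := by
        refine Finset.sum_congr rfl fun j hj => ?_
        have hj' : j < m := Finset.mem_range.mp hj
        have h1 : m - j = (m - j - 1) + 1 := by omega
        rw [h1, IH (m - j - 1) (by omega), ← h1, Finset.mul_sum, Finset.smul_sum]
        refine Finset.sum_congr rfl fun i _ => ?_
        rw [mul_smul_comm, smul_smul]
    _ = ∑ i ∈ range m, ∑ j ∈ range (m - i),
          ((-1 : ℚ) ^ j * ((-1 : ℚ) ^ i * ((i : ℚ) + 1)))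
            • (ee ℚ n (j + 1) * (ee ℚ n (i + 1) * HQ n (m - j - 1 - i))) := tri m _
    _ = ∑ i ∈ range m, ((-1 : ℚ) ^ i * ((i : ℚ) + 1)) • (ee ℚ n (i + 1) * HQ n (m - i)) := by
        refine Finset.sum_congr rfl fun i hi => ?_
        have hi' : i < m := Finset.mem_range.mp hi
        have h1 : m - i = (m - i - 1) + 1 := by omega
        rw [h1, HQ_succ, ← h1, Finset.mul_sum, Finset.smul_sum]
        refine Finset.sum_congr rfl fun j hj => ?_
        have hj' : j < m - i := Finset.mem_range.mp hj
        rw [show m - i - 1 - j = m - j - 1 - i from by omega]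
        rw [mul_smul_comm, smul_smul]
        rw [smul_eq_C_mul, smul_eq_C_mul]
        ring

lemma pderiv_ee (n : ℕ) (k : Fin n) (j : ℕ) :
    pderiv k (ee ℚ n (j + 1)) = if (k : ℕ) = j then 1 else 0 := by
  simp only [ee]
  split
  · rename_i h
    by_cases hkj : (k : ℕ) = j
    · rw [show (⟨j, by omega⟩ : Fin n) = k from by ext; simp [hkj]]
      simp [hkj]
    · rw [pderiv_X_of_ne (by simp [Fin.ext_iff]; omega)]
      simp [hkj]
  · rename_i h
    have : (k : ℕ) ≠ j := by have := k.isLt; omega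
    simp [this]

lemma pderiv_ss (n : ℕ) (k : Fin n) (ℓ : ℕ) :
    pderiv k (ss n ℓ)
      = if (k : ℕ) + 1 ≤ ℓ then
          ((-1 : ℚ) ^ (k : ℕ) * (ℓ : ℚ)) • HQ n (ℓ - (k : ℕ) - 1) else 0 := by
  induction ℓ using Nat.strong_induction_on with
  | _ ℓ IH =>
  match ℓ with
  | 0 => simp [ss]
  | (m + 1) =>
    rw [ss]
    rw [map_add, Derivation.map_smul, map_sum]
    have hterm : ∀ j ∈ range m,
        pderiv k (((-1 : ℚ) ^ j) • (ee ℚ n (j + 1) * ss n (m - j)))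
          = ((-1 : ℚ) ^ j) • ((if (k : ℕ) = j then 1 else 0) * ss n (m - j))
            + ((-1 : ℚ) ^ j) • (ee ℚ n (j + 1) *
                (if (k : ℕ) + 1 ≤ m - j then
                  ((-1 : ℚ) ^ (k : ℕ) * ((m - j : ℕ) : ℚ)) • HQ n (m - j - (k : ℕ) - 1)
                 else 0)) := by
      intro j hj
      rw [Derivation.map_smul, pderiv_mul, pderiv_ee, IH (m - j) (by omega), smul_add]
    rw [Finset.sum_congr rfl hterm, Finset.sum_add_distrib]
    rw [pderiv_ee]
    simp only [ite_mul, one_mul, zero_mul, smul_ite, smul_zero]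
    rw [Finset.sum_ite_eq]
    have hS2 : (∑ j ∈ range m, ((-1 : ℚ) ^ j) • (ee ℚ n (j + 1) *
          (if (k : ℕ) + 1 ≤ m - j then
            ((-1 : ℚ) ^ (k : ℕ) * ((m - j : ℕ) : ℚ)) • HQ n (m - j - (k : ℕ) - 1) else 0)))
        = ∑ j ∈ range (m - (k : ℕ)), ((-1 : ℚ) ^ j) • (ee ℚ n (j + 1) *
            (((-1 : ℚ) ^ (k : ℕ) * ((m - j : ℕ) : ℚ)) • HQ n (m - j - (k : ℕ) - 1))) := by
      simp only [mul_ite, mul_zero, smul_ite, smul_zero]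
      rw [← Finset.sum_filter]
      apply Finset.sum_congr
      · ext j; simp only [Finset.mem_filter, Finset.mem_range]; omega
      · intros; rfl
    rw [hS2]
    rcases lt_trichotomy ((k : ℕ)) m with hk | hk | hk
    · -- k < m
      rw [if_neg (show ¬((k:ℕ) = m) from by omega), zero_add,
          if_pos (Finset.mem_range.mpr hk), if_pos (by omega)]
      have e1 : m - (k : ℕ) = (m - (k : ℕ) - 1) + 1 := by omega
      rw [show m + 1 - (k : ℕ) - 1 = m - (k : ℕ) from by omega]
      rw [e1, ss_eq, HQ_succ, ← e1, Finset.smul_sum, Finset.smul_sum,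
          ← Finset.sum_add_distrib]
      refine Finset.sum_congr rfl fun i hi => ?_
      have hi' : i < m - (k : ℕ) := Finset.mem_range.mp hi
      rw [show m - (k : ℕ) - 1 - i = m - i - (k : ℕ) - 1 from by omega]
      rw [mul_smul_comm, smul_smul, smul_smul, smul_smul, ← add_smul]
      congr 1
      have : ((m - i : ℕ) : ℚ) = (m : ℚ) - (i : ℚ) := by
        have : i ≤ m := by omega
        push_cast [this]; ring
      rw [this]; push_cast; ring
    · -- k = m
      rw [if_pos hk, if_neg (by simp [hk]), if_pos (by omega)]
      rw [show m - (k : ℕ) = 0 from by omega, show m + 1 - (k : ℕ) - 1 = 0 from by omega]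
      simp [hk, HQ_zero]
    · -- k > m
      rw [if_neg (by omega), if_neg (by simp; omega), if_neg (by omega),
          show m - (k : ℕ) = 0 from by omega]
      simp

theorem stmt3 (n : ℕ) (hn : 1 ≤ n) (k l : Fin n) :
    ∃ q : MvPolynomial (Fin n) ℤ,
      MvPolynomial.map (Int.castRingHom ℚ) q = MvPolynomial.pderiv k (hh n l) := by
  by_cases hkl : (k : ℕ) ≤ (l : ℕ)
  · refine ⟨((-1 : ℤ) ^ ((l : ℕ) + (k : ℕ))) • HZ n ((l : ℕ) - (k : ℕ)), ?_⟩
    rw [hh, Derivation.map_smul, pderiv_ss, if_pos (by omega),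
        show (l : ℕ) + 1 - (k : ℕ) - 1 = (l : ℕ) - (k : ℕ) from by omega, smul_smul]
    rw [smul_eq_C_mul, map_mul, map_C, smul_eq_C_mul]
    have h0 : ((l : ℕ) : ℚ) + 1 ≠ 0 := by positivity
    have : (Int.castRingHom ℚ) ((-1 : ℤ) ^ ((l : ℕ) + (k : ℕ)))
        = (-1 : ℚ) ^ (l : ℕ) / (((l : ℕ) : ℚ) + 1) * ((-1 : ℚ) ^ (k : ℕ) * (((l : ℕ) + 1 : ℕ) : ℚ)) := by
      rw [eq_intCast]
      push_cast
      field_simp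
      ring
    rw [this]
    rfl
  · exact ⟨0, by rw [map_zero, hh, Derivation.map_smul, pderiv_ss, if_neg (by omega), smul_zero]⟩
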